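/- Let F be a field of characteristic zero, σ the shift on F(k), and let f = p/q ∈ F(k) with p, q ∈ F[k] coprime, deg(p) < deg(q), and q shift-free (i.e., gcd(q, σ^i(q)) = 1 for all nonzero integers i). If there exists a rational function r ∈ F(k) with f = σ(r) − r, then f = 0. -/

import Mathlib

open Polynomial

/-- **Lemma (rational summability).** If `f = p/q` with `p, q` coprime,
`deg p < deg q`, `q` shift-free, and `f = σ(r) − r` for some rational
function `r`, then `f = 0`. -/
theorem shift_free_proper_summable_eq_zero
    (F : Type*) [Field F] [CharZero F]
    (τ : Polynomial F ≃ₐ[F] Polynomial F) (hτ : τ X = X + 1)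
    (σ : RatFunc F ≃ₐ[F] RatFunc F)
    (hcompat : ∀ p : Polynomial F,
      σ (algebraMap (Polynomial F) (RatFunc F) p) =
        algebraMap (Polynomial F) (RatFunc F) (τ p))
    (p q : Polynomial F) (hq : q ≠ 0) (hpq : IsCoprime p q)
    (hdeg : p.degree < q.degree)
    (hsf : ∀ i : ℤ, i ≠ 0 → IsCoprime q ((τ ^ i) q))
    (f : RatFunc F)
    (hf : f = algebraMap (Polynomial F) (RatFunc F) p /
              algebraMap (Polynomial F) (RatFunc F) q)
    (r : RatFunc F) (heq : f = σ r - r) :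
    f = 0 := by
  by_contra hf0
  have hp0 : p ≠ 0 := by
    rintro rfl
    exact hf0 (by simp [hf])
  have hq1 : 1 ≤ q.natDegree := by
    have h0 : (0 : WithBot ℕ) ≤ p.degree := zero_le_degree_iff.mpr hp0
    exact natDegree_pos_iff_degree_pos.mpr (lt_of_le_of_lt h0 hdeg)
  -- powers of σ on polynomials
  have hpow : ∀ (n : ℕ) (a : Polynomial F),
      (σ ^ n) (algebraMap (Polynomial F) (RatFunc F) a)
        = algebraMap (Polynomial F) (RatFunc F) ((τ ^ n) a) := by
    intro n
    induction n with
    | zero => intro a; simp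
    | succ n ih =>
      intro a
      rw [pow_succ, pow_succ, AlgEquiv.mul_apply, AlgEquiv.mul_apply, hcompat, ih]
  -- τ is composition with X+1, hence degree preserving
  have hτc : ∀ a : Polynomial F, τ a = a.comp (X + 1) := by
    intro a
    have h : (τ : Polynomial F →ₐ[F] Polynomial F) = aeval (X + 1) :=
      Polynomial.algHom_ext (by simp [hτ])
    have : τ a = (τ : Polynomial F →ₐ[F] Polynomial F) a := rfl
    rw [this, h]
    simp [aeval_def, Polynomial.comp, Polynomial.algebraMap_eq]
  have hdegτ : ∀ a : Polynomial F, (τ a).natDegree = a.natDegree := by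
    intro a
    rw [hτc, natDegree_comp]
    have h1 : (X + 1 : Polynomial F) = X + C 1 := by rw [map_one]
    rw [h1, natDegree_X_add_C, mul_one]
  have hdegτn : ∀ (n : ℕ) (a : Polynomial F), ((τ ^ n) a).natDegree = a.natDegree := by
    intro n
    induction n with
    | zero => intro a; simp
    | succ n ih =>
      intro a
      rw [pow_succ, AlgEquiv.mul_apply, ih, hdegτ]
  have hne : ∀ (n : ℕ) (a : Polynomial F), a ≠ 0 → (τ ^ n) a ≠ 0 := by
    intro n a ha h
    exact ha ((τ ^ n).injective (by simpa using h))
  -- pairwise coprimality of shifts of q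
  have hcop : ∀ i j : ℕ, i ≠ j → IsCoprime ((τ ^ i) q) ((τ ^ j) q) := by
    have key : ∀ i j : ℕ, i < j → IsCoprime ((τ ^ i) q) ((τ ^ j) q) := by
      intro i j hij
      have h1 : IsCoprime q ((τ ^ ((j - i : ℕ) : ℤ)) q) :=
        hsf _ (by exact_mod_cast Nat.sub_ne_zero_of_lt hij)
      rw [zpow_natCast] at h1
      have h2 := h1.map ((τ ^ i : Polynomial F ≃ₐ[F] Polynomial F) :
        Polynomial F →+* Polynomial F)
      have h3 : (τ ^ i) ((τ ^ (j - i)) q) = (τ ^ j) q := by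
        rw [← AlgEquiv.mul_apply, ← pow_add]
        congr 2
        omega
      rw [← h3]
      simpa using h2
    intro i j hij
    rcases lt_or_gt_of_ne hij with h | h
    · exact key i j h
    · exact (key j i h).symm
  -- representation of σ^i f
  have hfrep : ∀ i : ℕ, (σ ^ i) f =
      algebraMap (Polynomial F) (RatFunc F) ((τ ^ i) p) /
        algebraMap (Polynomial F) (RatFunc F) ((τ ^ i) q) := by
    intro i
    rw [hf, map_div₀, hpow, hpow]
  have hqdvd2 : ∀ i : ℕ, RatFunc.denom ((σ ^ i) f) ∣ (τ ^ i) q := by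
    intro i
    rw [hfrep i]
    exact RatFunc.denom_div_dvd _ _
  -- q-shifts divide the denominators
  have hqdvd : ∀ i : ℕ, (τ ^ i) q ∣ RatFunc.denom ((σ ^ i) f) := by
    intro i
    have hb : (τ ^ i) q ≠ 0 := hne i q hq
    have hab : IsCoprime ((τ ^ i) p) ((τ ^ i) q) :=
      hpq.map ((τ ^ i : Polynomial F ≃ₐ[F] Polynomial F) : Polynomial F →+* Polynomial F)
    have hb' : algebraMap (Polynomial F) (RatFunc F) ((τ ^ i) q) ≠ 0 :=
      RatFunc.algebraMap_ne_zero hb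
    have hd' : algebraMap (Polynomial F) (RatFunc F) (((σ ^ i) f).denom) ≠ 0 :=
      RatFunc.algebraMap_ne_zero ((σ ^ i) f).denom_ne_zero
    have h1 : algebraMap (Polynomial F) (RatFunc F) ((τ ^ i) p) /
        algebraMap (Polynomial F) (RatFunc F) ((τ ^ i) q) =
        algebraMap (Polynomial F) (RatFunc F) (((σ ^ i) f).num) /
          algebraMap (Polynomial F) (RatFunc F) (((σ ^ i) f).denom) := by
      rw [RatFunc.num_div_denom, hfrep]
    rw [div_eq_div_iff hb' hd'] at h1
    have h2 : (τ ^ i) p * ((σ ^ i) f).denom = ((σ ^ i) f).num * (τ ^ i) q :=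
      RatFunc.algebraMap_injective F (by rw [map_mul, map_mul]; exact h1)
    have h3 : (τ ^ i) q ∣ (τ ^ i) p * ((σ ^ i) f).denom :=
      ⟨((σ ^ i) f).num, by rw [h2, mul_comm]⟩
    exact hab.symm.dvd_of_dvd_mul_left h3
  have hdenom_neg : ∀ x : RatFunc F, RatFunc.denom (-x) ∣ RatFunc.denom x := by
    intro x
    have h : -x = algebraMap (Polynomial F) (RatFunc F) (-(x.num)) /
        algebraMap (Polynomial F) (RatFunc F) x.denom := by
      rw [map_neg, neg_div, RatFunc.num_div_denom]
    rw [h]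
    exact RatFunc.denom_div_dvd _ _
  -- denominator of a partial sum divides product of shifts of q
  have hsum_dvd : ∀ s : Finset ℕ,
      RatFunc.denom (∑ i ∈ s, (σ ^ i) f) ∣ ∏ i ∈ s, (τ ^ i) q := by
    intro s
    induction s using Finset.induction with
    | empty => simp [RatFunc.denom_zero]
    | @insert a s ha ih =>
      rw [Finset.sum_insert ha, Finset.prod_insert ha]
      exact (RatFunc.denom_add_dvd _ _).trans (mul_dvd_mul (hqdvd2 a) ih)
  -- each shift of q divides the denominator of the full sum
  have hdvd_prod : ∀ n : ℕ,
      (∏ i ∈ Finset.range n, (τ ^ i) q) ∣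
        RatFunc.denom (∑ i ∈ Finset.range n, (σ ^ i) f) := by
    intro n
    apply Finset.prod_dvd_of_coprime
    · intro i _ j _ hij
      exact hcop i j hij
    · intro i hi
      have e1 : (∑ j ∈ Finset.range n, (σ ^ j) f) - (σ ^ i) f =
          ∑ j ∈ (Finset.range n).erase i, (σ ^ j) f := by
        rw [sub_eq_iff_eq_add']
        exact (Finset.add_sum_erase _ _ hi).symm
      have hrest : RatFunc.denom (-((∑ j ∈ Finset.range n, (σ ^ j) f) - (σ ^ i) f)) ∣
          ∏ j ∈ (Finset.range n).erase i, (τ ^ j) q := by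
        rw [e1]
        exact (hdenom_neg _).trans (hsum_dvd _)
      have h1 : (σ ^ i) f = (∑ j ∈ Finset.range n, (σ ^ j) f) +
          (-((∑ j ∈ Finset.range n, (σ ^ j) f) - (σ ^ i) f)) := by ring
      have h2 : RatFunc.denom ((σ ^ i) f) ∣
          RatFunc.denom (∑ j ∈ Finset.range n, (σ ^ j) f) *
            RatFunc.denom (-((∑ j ∈ Finset.range n, (σ ^ j) f) - (σ ^ i) f)) := by
        nth_rewrite 1 [h1]
        exact RatFunc.denom_add_dvd _ _
      have hco : IsCoprime ((τ ^ i) q)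
          (RatFunc.denom (-((∑ j ∈ Finset.range n, (σ ^ j) f) - (σ ^ i) f))) :=
        (IsCoprime.prod_right fun j hj =>
          hcop i j (Finset.ne_of_mem_erase hj).symm).of_isCoprime_of_dvd_right hrest
      exact hco.dvd_of_dvd_mul_right ((hqdvd i).trans h2)
  -- telescoping
  have htel : ∀ n : ℕ, (∑ i ∈ Finset.range n, (σ ^ i) f) = (σ ^ n) r - r := by
    intro n
    induction n with
    | zero => simp
    | succ n ih =>
      rw [Finset.sum_range_succ, ih]
      have h : (σ ^ n) f = (σ ^ (n + 1)) r - (σ ^ n) r := by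
        rw [heq, map_sub, pow_succ, AlgEquiv.mul_apply]
      rw [h]
      ring
  -- final degree comparison
  set n := 2 * (RatFunc.denom r).natDegree + 1 with hn
  have hub : (RatFunc.denom ((σ ^ n) r - r)).natDegree ≤
      2 * (RatFunc.denom r).natDegree := by
    have e : (σ ^ n) r - r = (σ ^ n) r + (-r) := by ring
    have h1 : RatFunc.denom ((σ ^ n) r - r) ∣
        (τ ^ n) (RatFunc.denom r) * RatFunc.denom r := by
      rw [e]
      refine (RatFunc.denom_add_dvd _ _).trans (mul_dvd_mul ?_ (hdenom_neg r))
      have e2 : (σ ^ n) r = algebraMap (Polynomial F) (RatFunc F) ((τ ^ n) r.num) /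
          algebraMap (Polynomial F) (RatFunc F) ((τ ^ n) r.denom) := by
        rw [← hpow, ← hpow, ← map_div₀, RatFunc.num_div_denom]
      rw [e2]
      exact RatFunc.denom_div_dvd _ _
    have hne0 : (τ ^ n) (RatFunc.denom r) * RatFunc.denom r ≠ 0 :=
      mul_ne_zero (hne n _ (RatFunc.denom_ne_zero r)) (RatFunc.denom_ne_zero r)
    have h2 := Polynomial.natDegree_le_of_dvd h1 hne0
    rw [natDegree_mul (hne n _ (RatFunc.denom_ne_zero r)) (RatFunc.denom_ne_zero r),
      hdegτn] at h2
    omega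
  have hlb : n * q.natDegree ≤ (RatFunc.denom ((σ ^ n) r - r)).natDegree := by
    have h1 := hdvd_prod n
    rw [htel n] at h1
    have h2 := Polynomial.natDegree_le_of_dvd h1 (RatFunc.denom_ne_zero _)
    calc n * q.natDegree
        = (∏ i ∈ Finset.range n, (τ ^ i) q).natDegree := by
          rw [Polynomial.natDegree_prod _ _ fun i _ => hne i q hq]
          simp only [hdegτn]
          simp [mul_comm]
      _ ≤ _ := h2
  have hfin : n * q.natDegree ≤ 2 * (RatFunc.denom r).natDegree := hlb.trans hub
  have hnle : n ≤ n * q.natDegree := Nat.le_mul_of_pos_right n (by omega)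
  omega
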